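/- Let R_o, R_d have joint density f(r_o,r_d) = (2πρλ)² r_o r_d exp(−πρλ r_d²) on 0 ≤ r_o ≤ r_d. Then conditioned on the event {R_o ≤ τ R_d}, the CDF of R_o is F(r) = 1 − exp(−πρλ r²/τ²) for r > 0. -/

import Mathlib

open MeasureTheory Set Real Filter Topology

private lemma aux_integral_Ioi (b c : ℝ) (hb : 0 < b) :
    ∫ x in Ioi c, x * Real.exp (-b * x ^ 2) = Real.exp (-b * c ^ 2) / (2 * b) := by
  have hderiv : ∀ x ∈ Ici c,
      HasDerivAt (fun x => -(2 * b)⁻¹ * Real.exp (-b * x ^ 2))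
        (x * Real.exp (-b * x ^ 2)) x := by
    intro x _
    have h1 : HasDerivAt (fun x : ℝ => -b * x ^ 2) (-b * (2 * x)) x := by
      simpa using ((hasDerivAt_pow 2 x).const_mul (-b))
    have h2 := (h1.exp).const_mul (-(2 * b)⁻¹)
    refine h2.congr_deriv ?_
    field_simp
  have hint : IntegrableOn (fun x => x * Real.exp (-b * x ^ 2)) (Ioi c) :=
    (integrable_mul_exp_neg_mul_sq hb).integrableOn
  have htend : Tendsto (fun x : ℝ => -(2 * b)⁻¹ * Real.exp (-b * x ^ 2)) atTop (𝓝 0) := by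
    have h0 : Tendsto (fun x : ℝ => x ^ 2) atTop atTop := tendsto_pow_atTop two_ne_zero
    have h1 : Tendsto (fun x : ℝ => -b * x ^ 2) atTop atBot :=
      (tendsto_const_mul_atBot_of_neg (by linarith)).mpr h0
    have h2 : Tendsto (fun x : ℝ => Real.exp (-b * x ^ 2)) atTop (𝓝 0) :=
      Real.tendsto_exp_atBot.comp h1
    have h3 := h2.const_mul (-(2 * b)⁻¹)
    simpa using h3
  rw [integral_Ioi_of_hasDerivAt_of_tendsto' hderiv hint htend]
  rw [zero_sub]
  field_simp

/-- Conditioned on the CC event `{R_o ≤ τ R_d}` (of probability τ²), the CDF of the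
service link distance `R_o` is `F(r) = 1 − exp(−πρλ r²/τ²)` for `r > 0`. -/
theorem cc_user_Ro_cdf (ρ l τ : ℝ) (hρ : 0 < ρ) (hl : 0 < l)
    (hτ : τ ∈ Set.Ioo (0 : ℝ) 1) (r : ℝ) (hr : 0 < r) :
    (∫ ro in Ioc (0 : ℝ) r, ∫ rd in Ioi (ro / τ),
        (2 * π * ρ * l) ^ 2 * ro * rd * Real.exp (-(π * ρ * l) * rd ^ 2)) / τ ^ 2
      = 1 - Real.exp (-(π * ρ * l) * r ^ 2 / τ ^ 2) := by
  obtain ⟨hτ0, hτ1⟩ := hτ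
  have ha : 0 < π * ρ * l := by positivity
  set a := π * ρ * l with ha_def
  have hintegrand : ∀ ro : ℝ, (∫ rd in Ioi (ro / τ),
      (2 * π * ρ * l) ^ 2 * ro * rd * Real.exp (-(π * ρ * l) * rd ^ 2))
      = 2 * a * ro * Real.exp (-(a / τ ^ 2) * ro ^ 2) := by
    intro ro
    have h1 : ∫ rd in Ioi (ro / τ), rd * Real.exp (-a * rd ^ 2)
        = Real.exp (-a * (ro / τ) ^ 2) / (2 * a) := aux_integral_Ioi a (ro / τ) ha
    have h2 : (∫ rd in Ioi (ro / τ),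
        (2 * π * ρ * l) ^ 2 * ro * rd * Real.exp (-(π * ρ * l) * rd ^ 2))
        = (2 * a) ^ 2 * ro * ∫ rd in Ioi (ro / τ), rd * Real.exp (-a * rd ^ 2) := by
      rw [← MeasureTheory.integral_const_mul]
      congr 1
      funext rd
      rw [ha_def]
      ring
    rw [h2, h1]
    have harg : -a * (ro / τ) ^ 2 = -(a / τ ^ 2) * ro ^ 2 := by
      field_simp
    rw [harg]
    field_simp
  rw [MeasureTheory.setIntegral_congr_fun measurableSet_Ioc
    (fun ro _ => hintegrand ro)]
  set b := a / τ ^ 2 with hb_def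
  have hb : 0 < b := by rw [hb_def]; positivity
  have outer : ∫ ro in Ioc (0 : ℝ) r, 2 * a * ro * Real.exp (-b * ro ^ 2)
      = τ ^ 2 * (1 - Real.exp (-b * r ^ 2)) := by
    rw [← intervalIntegral.integral_of_le hr.le]
    have hderiv : ∀ x ∈ Set.uIcc (0 : ℝ) r,
        HasDerivAt (fun x => -τ ^ 2 * Real.exp (-b * x ^ 2))
          (2 * a * x * Real.exp (-b * x ^ 2)) x := by
      intro x _
      have h1 : HasDerivAt (fun x : ℝ => -b * x ^ 2) (-b * (2 * x)) x := by
        simpa using ((hasDerivAt_pow 2 x).const_mul (-b))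
      have h2 := (h1.exp).const_mul (-τ ^ 2)
      refine h2.congr_deriv ?_
      rw [hb_def]
      field_simp
    rw [intervalIntegral.integral_eq_sub_of_hasDerivAt hderiv
      (Continuous.intervalIntegrable (by continuity) 0 r)]
    simp [Real.exp_zero]
    ring
  rw [outer]
  have hfin : -b * r ^ 2 = -a * r ^ 2 / τ ^ 2 := by
    rw [hb_def]; field_simp
  rw [hfin]
  field_simp
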